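/- For the function F(z) = |z|^{p-1} z on the complex numbers with p > 1, and with θ := min(p-1, 1), the derivative components F_z(z) = ((p+1)/2)|z|^{p-1} and F_{z̄}(z) = ((p-1)/2)|z|^{p-3} z² satisfy the Hölder continuity estimate |F'(z) - F'(w)| ≤ C |z - w|^θ (|z|^{p-1-θ} + |w|^{p-1-θ}) for all complex z, w, where C depends only on p. -/

import Mathlib

noncomputable section

open Real NNReal

/-- The Wirtinger derivative `F_z` of `F(z) = |z|^(p-1) z`. -/
def Fz (p : ℝ) (z : ℂ) : ℂ := (((p + 1) / 2 * ‖z‖ ^ (p - 1) : ℝ) : ℂ)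

/-- The Wirtinger derivative `F_{z̄}` of `F(z) = |z|^(p-1) z` (interpreted as `0` at `z = 0`). -/
def Fzbar (p : ℝ) (z : ℂ) : ℂ := (((p - 1) / 2 * ‖z‖ ^ (p - 3) : ℝ) : ℂ) * z ^ 2

/-- The Euclidean norm of the pair `F'(z) - F'(w) = (F_z z - F_z w, F_{z̄} z - F_{z̄} w)`. -/
def FderivDist (p : ℝ) (z w : ℂ) : ℝ :=
  Real.sqrt (‖Fz p z - Fz p w‖ ^ 2 + ‖Fzbar p z - Fzbar p w‖ ^ 2)


private lemma rpow_sub_le_sub_rpow {s a b : ℝ} (hs0 : 0 ≤ s) (hs1 : s ≤ 1)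
    (hb : 0 ≤ b) (hba : b ≤ a) : a ^ s - b ^ s ≤ (a - b) ^ s := by
  have hx : (0:ℝ) ≤ a - b := by linarith
  have h := NNReal.rpow_add_le_add_rpow (Real.toNNReal (a - b)) (Real.toNNReal b) hs0 hs1
  have h' : ((Real.toNNReal (a-b) + Real.toNNReal b : ℝ≥0) : ℝ) ^ s
      ≤ ((a-b) : ℝ) ^ s + b ^ s := by
    have := NNReal.coe_le_coe.2 h
    simpa [NNReal.coe_rpow, Real.coe_toNNReal _ hx, Real.coe_toNNReal _ hb] using this
  have hab : ((Real.toNNReal (a-b) + Real.toNNReal b : ℝ≥0) : ℝ) = a := by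
    simp [Real.coe_toNNReal _ hx, Real.coe_toNNReal _ hb]
  rw [hab] at h'
  linarith

private lemma rpow_mvt {s a b : ℝ} (hb : 0 < b) (hba : b ≤ a) :
    |a ^ s - b ^ s| ≤ |s| * (b ^ (s-1) + a ^ (s-1)) * (a - b) := by
  have key : ∀ x ∈ Set.Icc b a, HasDerivWithinAt (fun t : ℝ => t ^ s)
      (s * x ^ (s-1)) (Set.Icc b a) x := by
    intro x hx
    exact (Real.hasDerivAt_rpow_const (Or.inl (lt_of_lt_of_le hb hx.1).ne')).hasDerivWithinAt
  have bound : ∀ x ∈ Set.Icc b a, ‖s * x ^ (s-1)‖ ≤ |s| * (b ^ (s-1) + a ^ (s-1)) := by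
    intro x hx
    have hx0 : 0 < x := lt_of_lt_of_le hb hx.1
    rw [norm_mul, Real.norm_eq_abs, Real.norm_eq_abs,
      abs_of_nonneg (Real.rpow_nonneg hx0.le _)]
    apply mul_le_mul_of_nonneg_left _ (abs_nonneg s)
    rcases le_or_gt (s - 1) 0 with h | h
    · have := Real.rpow_le_rpow_of_nonpos hb hx.1 h
      have h2 : (0:ℝ) ≤ a ^ (s-1) := Real.rpow_nonneg (hb.trans_le hba).le _
      linarith
    · have := Real.rpow_le_rpow hx0.le hx.2 h.le
      have h2 : (0:ℝ) ≤ b ^ (s-1) := Real.rpow_nonneg hb.le _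
      linarith
  have := (convex_Icc b a).norm_image_sub_le_of_norm_hasDerivWithin_le key bound
    (Set.left_mem_Icc.2 hba) (Set.right_mem_Icc.2 hba)
  simpa [Real.norm_eq_abs, abs_of_nonneg (sub_nonneg.2 hba)] using this

private lemma fz_core (p : ℝ) (hp : 1 < p) {a b d : ℝ} (hb : 0 ≤ b) (hba : b ≤ a)
    (hd : a - b ≤ d) (hd0 : 0 ≤ d) :
    a ^ (p-1) - b ^ (p-1) ≤
      (p+1) * d ^ (min (p-1) 1) * (a ^ (p-1-min (p-1) 1) + b ^ (p-1-min (p-1) 1)) := by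
  have ha : 0 ≤ a := hb.trans hba
  rcases le_or_gt p 2 with hp2 | hp2
  · have hθ : min (p-1) 1 = p - 1 := min_eq_left (by linarith)
    have hτ : p - 1 - min (p-1) 1 = 0 := by rw [hθ]; ring
    rw [hτ, hθ, Real.rpow_zero, Real.rpow_zero]
    have h1 : a ^ (p-1) - b ^ (p-1) ≤ (a-b) ^ (p-1) :=
      rpow_sub_le_sub_rpow (by linarith) (by linarith) hb hba
    have h2 : (a-b) ^ (p-1) ≤ d ^ (p-1) :=
      Real.rpow_le_rpow (by linarith) hd (by linarith)
    have h3 : (0:ℝ) ≤ d ^ (p-1) := Real.rpow_nonneg hd0 _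
    nlinarith
  · have hθ : min (p-1) 1 = 1 := min_eq_right (by linarith)
    have hτ : p - 1 - min (p-1) 1 = p - 2 := by rw [hθ]; ring
    rw [hτ, hθ, Real.rpow_one]
    have hA : (0:ℝ) ≤ a ^ (p-2) := Real.rpow_nonneg ha _
    have hB : (0:ℝ) ≤ b ^ (p-2) := Real.rpow_nonneg hb _
    rcases eq_or_lt_of_le hb with hb0 | hb0
    · rcases eq_or_lt_of_le ha with ha0 | ha0
      · rw [← ha0, ← hb0]
        simp [Real.zero_rpow (show p - 1 ≠ 0 by linarith)]
        positivity
      · rw [← hb0, Real.zero_rpow (show p - 1 ≠ 0 by linarith),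
          Real.zero_rpow (show p - 2 ≠ 0 by linarith)]
        have e : a ^ (p-1) = a * a ^ (p-2) := by
          rw [show p - 1 = 1 + (p-2) by ring, Real.rpow_add ha0, Real.rpow_one]
        have had : a ≤ d := by rw [← hb0] at hd; linarith
        rw [e]
        have h1 : a * a ^ (p-2) ≤ d * a ^ (p-2) :=
          mul_le_mul_of_nonneg_right had hA
        nlinarith [mul_nonneg hd0 hA]
    · have h := rpow_mvt (s := p-1) hb0 hba
      have he : p - 1 - 1 = p - 2 := by ring
      rw [he, abs_of_pos (show (0:ℝ) < p - 1 by linarith)] at h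
      have h1 : a ^ (p-1) - b ^ (p-1) ≤ |a ^ (p-1) - b ^ (p-1)| := le_abs_self _
      have h2 : (p-1) * (b ^ (p-2) + a ^ (p-2)) * (a - b)
          ≤ (p+1) * d * (a ^ (p-2) + b ^ (p-2)) := by
        have hab0 : 0 ≤ a - b := by linarith
        nlinarith [mul_le_mul_of_nonneg_left hd
            (mul_nonneg (show (0:ℝ) ≤ p - 1 by linarith) (add_nonneg hB hA)),
          mul_nonneg (mul_nonneg (show (0:ℝ) ≤ 2 by norm_num) hd0) (add_nonneg hA hB)]
      linarith

set_option maxHeartbeats 1000000 in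
private lemma fzbar_core (p : ℝ) (hp : 1 < p) (z w : ℂ) (hba : ‖w‖ ≤ ‖z‖) :
    ‖((‖z‖ ^ (p-3) : ℝ) : ℂ) * z^2 - ((‖w‖ ^ (p-3) : ℝ) : ℂ) * w^2‖
      ≤ (9*(p+3)+4) * ‖z-w‖ ^ (min (p-1) 1) *
        (‖z‖ ^ (p-1-min (p-1) 1) + ‖w‖ ^ (p-1-min (p-1) 1)) := by
  set a := ‖z‖ with ha_def
  set b := ‖w‖ with hb_def
  set d := ‖z - w‖ with hd_def
  set θ := min (p-1) 1 with hθ_def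
  set τ := p - 1 - θ with hτ_def
  have ha0 : 0 ≤ a := norm_nonneg z
  have hb0 : 0 ≤ b := norm_nonneg w
  have hd0 : 0 ≤ d := norm_nonneg _
  have hθ0 : 0 < θ := lt_min (by linarith) one_pos
  have hθ1 : θ ≤ 1 := min_le_right _ _
  have hθp : θ ≤ p - 1 := min_le_left _ _
  have hτ0 : 0 ≤ τ := by rw [hτ_def]; linarith
  have hK : (0:ℝ) < 9*(p+3)+4 := by nlinarith
  have habd : a - b ≤ d := by
    rw [ha_def, hb_def, hd_def]
    exact norm_sub_norm_le z w
  have hτa : (0:ℝ) ≤ a ^ τ := Real.rpow_nonneg ha0 _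
  have hτb : (0:ℝ) ≤ b ^ τ := Real.rpow_nonneg hb0 _
  have hdθ : (0:ℝ) ≤ d ^ θ := Real.rpow_nonneg hd0 _
  rcases eq_or_ne z w with rfl | hzw
  · simp only [show b = a from rfl, sub_self, norm_zero]
    positivity
  have hdpos : 0 < d := norm_pos_iff.2 (sub_ne_zero.2 hzw)
  have hapos : 0 < a := by
    rcases ha0.lt_or_eq with h | h
    · exact h
    · exfalso
      have hz : z = 0 := by rwa [eq_comm, ha_def, norm_eq_zero] at h
      have hw : w = 0 := by
        have hbz : b = 0 := le_antisymm (h ▸ hba) hb0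
        rwa [hb_def, norm_eq_zero] at hbz
      exact hzw (hz.trans hw.symm)
  have h2r : a ^ (2:ℕ) = a ^ ((2:ℝ)) := by
    rw [← Real.rpow_natCast a 2]; norm_num
  rcases le_or_gt a (2*d) with hcase | hcase
  · -- a ≤ 2d : crude bound
    have ht1 : ‖((a ^ (p-3) : ℝ) : ℂ) * z^2‖ = a ^ (p-3) * a^2 := by
      rw [norm_mul, Complex.norm_real, Real.norm_eq_abs, abs_of_nonneg (Real.rpow_nonneg ha0 _), norm_pow]
    have ht2 : ‖((b ^ (p-3) : ℝ) : ℂ) * w^2‖ = b ^ (p-3) * b^2 := by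
      rw [norm_mul, Complex.norm_real, Real.norm_eq_abs, abs_of_nonneg (Real.rpow_nonneg hb0 _), norm_pow]
    have e1 : a ^ (p-3) * a^2 = a ^ (p-1) := by
      rw [h2r, ← Real.rpow_add hapos, show p - 3 + 2 = p - 1 by ring]
    have e2 : b ^ (p-3) * b^2 ≤ a ^ (p-1) := by
      rcases hb0.lt_or_eq with h | h
      · have hb2r : b ^ (2:ℕ) = b ^ ((2:ℝ)) := by
          rw [← Real.rpow_natCast b 2]; norm_num
        have : b ^ (p-3) * b^2 = b ^ (p-1) := by
          rw [hb2r, ← Real.rpow_add h, show p - 3 + 2 = p - 1 by ring]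
        rw [this]
        exact Real.rpow_le_rpow hb0 hba (by linarith)
      · rw [← h]
        simpa using Real.rpow_nonneg ha0 (p-1)
    have hsum : ‖((a ^ (p-3) : ℝ) : ℂ) * z^2 - ((b ^ (p-3) : ℝ) : ℂ) * w^2‖
        ≤ 2 * a ^ (p-1) := by
      calc ‖((a ^ (p-3) : ℝ) : ℂ) * z^2 - ((b ^ (p-3) : ℝ) : ℂ) * w^2‖
          ≤ ‖((a ^ (p-3) : ℝ) : ℂ) * z^2‖
            + ‖((b ^ (p-3) : ℝ) : ℂ) * w^2‖ := by
            exact norm_sub_le _ _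
        _ ≤ 2 * a ^ (p-1) := by rw [ht1, ht2, e1]; linarith
    have hsplit : a ^ (p-1) = a ^ θ * a ^ τ := by
      rw [← Real.rpow_add hapos]; congr 1; rw [hτ_def]; ring
    have h2 : a ^ θ ≤ 2 * d ^ θ := by
      calc a ^ θ ≤ (2*d) ^ θ := Real.rpow_le_rpow ha0 hcase hθ0.le
        _ = 2 ^ θ * d ^ θ := Real.mul_rpow (by norm_num) hd0
        _ ≤ 2 * d ^ θ := by
            have h21 : (2:ℝ) ^ θ ≤ 2 ^ (1:ℝ) := Real.rpow_le_rpow_of_exponent_le one_le_two hθ1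
            rw [Real.rpow_one] at h21
            exact mul_le_mul_of_nonneg_right h21 hdθ
    calc ‖((a ^ (p-3) : ℝ) : ℂ) * z^2 - ((b ^ (p-3) : ℝ) : ℂ) * w^2‖
        ≤ 2 * a ^ (p-1) := hsum
      _ = 2 * (a ^ θ * a ^ τ) := by rw [hsplit]
      _ ≤ 2 * (2 * d ^ θ * a ^ τ) := by
          apply mul_le_mul_of_nonneg_left _ (by norm_num)
          exact mul_le_mul_of_nonneg_right h2 hτa
      _ ≤ (9*(p+3)+4) * d ^ θ * (a ^ τ + b ^ τ) := by
          nlinarith [mul_nonneg hdθ hτa, mul_nonneg hdθ hτb]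
  · -- 2d < a : smooth regime
    have hbpos : a / 2 < b := by linarith
    have hb0' : 0 < b := by linarith
    have eA2 : a ^ (p-2) = a ^ (p-3) * a := by
      rw [show p - 2 = p - 3 + 1 by ring, Real.rpow_add hapos, Real.rpow_one]
    have eA4 : a ^ (p-2) = a ^ (p-4) * a ^ 2 := by
      rw [h2r, ← Real.rpow_add hapos, show p - 4 + 2 = p - 2 by ring]
    have hdec : ((a ^ (p-3) : ℝ) : ℂ) * z^2 - ((b ^ (p-3) : ℝ) : ℂ) * w^2
        = ((a ^ (p-3) : ℝ) : ℂ) * (z^2 - w^2) + (((a ^ (p-3) - b ^ (p-3) : ℝ)) : ℂ) * w^2 := by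
      push_cast; ring
    have hfirst : ‖((a ^ (p-3) : ℝ) : ℂ) * (z^2 - w^2)‖ ≤ 2 * a ^ (p-2) * d := by
      have hzw2 : ‖z^2 - w^2‖ ≤ 2 * a * d := by
        have hfac : z^2 - w^2 = (z + w) * (z - w) := by ring
        rw [hfac, norm_mul]
        have h1 : ‖z + w‖ ≤ a + b := norm_add_le z w
        have h2 : a + b ≤ 2 * a := by linarith
        calc ‖z+w‖ * d ≤ (2*a) * d :=
          mul_le_mul_of_nonneg_right (h1.trans h2) hd0
          _ = 2 * a * d := by ring
      rw [norm_mul, Complex.norm_real, Real.norm_eq_abs, abs_of_nonneg (Real.rpow_nonneg ha0 _)]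
      calc a ^ (p-3) * ‖z^2 - w^2‖ ≤ a ^ (p-3) * (2 * a * d) :=
            mul_le_mul_of_nonneg_left hzw2 (Real.rpow_nonneg ha0 _)
        _ = 2 * (a ^ (p-3) * a) * d := by ring
        _ = 2 * a ^ (p-2) * d := by rw [← eA2]
    have hb4 : b ^ (p-4) ≤ 8 * a ^ (p-4) := by
      rcases le_or_gt (p-4) 0 with h | h
      · have h1 : b ^ (p-4) ≤ (a/2) ^ (p-4) :=
          Real.rpow_le_rpow_of_nonpos (by linarith) hbpos.le h
        have h2 : (a/2 : ℝ) ^ (p-4) = a ^ (p-4) * 2 ^ (4-p) := by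
          rw [Real.div_rpow ha0 (by norm_num : (0:ℝ) ≤ 2), div_eq_mul_inv,
            ← Real.rpow_neg (by norm_num : (0:ℝ) ≤ 2), show -(p-4) = 4 - p by ring]
        have h3 : (2:ℝ) ^ (4-p) ≤ 8 := by
          calc (2:ℝ) ^ (4-p) ≤ 2 ^ (3:ℝ) :=
            Real.rpow_le_rpow_of_exponent_le one_le_two (by linarith)
            _ = 8 := by
              rw [show (3:ℝ) = ((3:ℕ):ℝ) by norm_num, Real.rpow_natCast]; norm_num
        calc b ^ (p-4) ≤ a ^ (p-4) * 2 ^ (4-p) := h1.trans_eq h2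
          _ ≤ a ^ (p-4) * 8 := mul_le_mul_of_nonneg_left h3 (Real.rpow_nonneg ha0 _)
          _ = 8 * a ^ (p-4) := by ring
      · have := Real.rpow_le_rpow hb0 hba h.le
        nlinarith [Real.rpow_nonneg ha0 (p-4)]
    have hsecond : ‖(((a ^ (p-3) - b ^ (p-3) : ℝ)) : ℂ) * w^2‖
        ≤ 9 * (p+3) * a ^ (p-2) * d := by
      rw [norm_mul, Complex.norm_real, Real.norm_eq_abs, norm_pow]
      have hmvt := rpow_mvt (s := p-3) hb0' hba
      rw [show p - 3 - 1 = p - 4 by ring] at hmvt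
      have hp3 : |p - 3| ≤ p + 3 := abs_le.2 ⟨by linarith, by linarith⟩
      have hA4 : (0:ℝ) ≤ a ^ (p-4) := Real.rpow_nonneg ha0 _
      have hB4 : (0:ℝ) ≤ b ^ (p-4) := Real.rpow_nonneg hb0 _
      have hnn : (0:ℝ) ≤ b ^ (p-4) + a ^ (p-4) := add_nonneg hB4 hA4
      have hab0 : (0:ℝ) ≤ a - b := by linarith
      have e1 : b ^ (p-4) + a ^ (p-4) ≤ 9 * a ^ (p-4) := by linarith
      have hstep : |a ^ (p-3) - b ^ (p-3)| ≤ (p+3) * (9 * a ^ (p-4)) * d := by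
        calc |a ^ (p-3) - b ^ (p-3)|
            ≤ |p-3| * (b ^ (p-4) + a ^ (p-4)) * (a - b) := hmvt
          _ ≤ ((p+3) * (9 * a ^ (p-4))) * (a - b) :=
              mul_le_mul_of_nonneg_right
                (mul_le_mul hp3 e1 hnn (by linarith)) hab0
          _ ≤ ((p+3) * (9 * a ^ (p-4))) * d :=
              mul_le_mul_of_nonneg_left habd
                (mul_nonneg (by linarith) (by linarith))
      have hb2 : b ^ 2 ≤ a ^ 2 := pow_le_pow_left₀ hb0 hba 2
      have habs : (0:ℝ) ≤ |a ^ (p-3) - b ^ (p-3)| := abs_nonneg _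
      calc |a ^ (p-3) - b ^ (p-3)| * b ^ 2
          ≤ ((p+3) * (9 * a ^ (p-4)) * d) * a ^ 2 :=
            mul_le_mul hstep hb2 (pow_nonneg hb0 2)
              (mul_nonneg (mul_nonneg (by linarith) (by linarith)) hd0)
        _ = 9 * (p+3) * (a ^ (p-4) * a ^ 2) * d := by ring
        _ = 9 * (p+3) * a ^ (p-2) * d := by rw [← eA4]
    have htot : ‖((a ^ (p-3) : ℝ) : ℂ) * z^2 - ((b ^ (p-3) : ℝ) : ℂ) * w^2‖
        ≤ (9*(p+3)+2) * d * a ^ (p-2) := by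
      rw [hdec]
      calc ‖((a ^ (p-3) : ℝ) : ℂ) * (z^2 - w^2)
            + (((a ^ (p-3) - b ^ (p-3) : ℝ)) : ℂ) * w^2‖
          ≤ ‖((a ^ (p-3) : ℝ) : ℂ) * (z^2 - w^2)‖
            + ‖(((a ^ (p-3) - b ^ (p-3) : ℝ)) : ℂ) * w^2‖ :=
            norm_add_le _ _
        _ ≤ 2 * a ^ (p-2) * d + 9 * (p+3) * a ^ (p-2) * d := add_le_add hfirst hsecond
        _ = (9*(p+3)+2) * d * a ^ (p-2) := by ring
    have hkey : d * a ^ (p-2) ≤ d ^ θ * a ^ τ := by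
      have e1 : d = d ^ θ * d ^ (1-θ) := by
        rw [← Real.rpow_add hdpos]; norm_num
      have h1 : d ^ (1-θ) ≤ a ^ (1-θ) :=
        Real.rpow_le_rpow hd0 (by linarith) (by linarith)
      have e2 : a ^ (1-θ) * a ^ (p-2) = a ^ τ := by
        rw [← Real.rpow_add hapos]; congr 1; rw [hτ_def]; ring
      calc d * a ^ (p-2) = d ^ θ * (d ^ (1-θ) * a ^ (p-2)) := by
            conv_lhs => rw [e1]
            ring
        _ ≤ d ^ θ * (a ^ (1-θ) * a ^ (p-2)) := by
            apply mul_le_mul_of_nonneg_left _ hdθ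
            exact mul_le_mul_of_nonneg_right h1 (Real.rpow_nonneg ha0 _)
        _ = d ^ θ * a ^ τ := by rw [e2]
    calc ‖((a ^ (p-3) : ℝ) : ℂ) * z^2 - ((b ^ (p-3) : ℝ) : ℂ) * w^2‖
        ≤ (9*(p+3)+2) * d * a ^ (p-2) := htot
      _ = (9*(p+3)+2) * (d * a ^ (p-2)) := by ring
      _ ≤ (9*(p+3)+2) * (d ^ θ * a ^ τ) :=
          mul_le_mul_of_nonneg_left hkey (by linarith)
      _ ≤ (9*(p+3)+4) * d ^ θ * (a ^ τ + b ^ τ) := by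
          nlinarith [mul_nonneg hdθ hτa, mul_nonneg hdθ hτb]

private lemma main_aux (p : ℝ) (hp : 1 < p) (z w : ℂ) (hba : ‖w‖ ≤ ‖z‖) :
    FderivDist p z w ≤
      ((p+1)/2 * (p+1) + (p-1)/2 * (9*(p+3)+4)) * ‖z - w‖ ^ min (p - 1) 1 *
        (‖z‖ ^ (p - 1 - min (p - 1) 1) + ‖w‖ ^ (p - 1 - min (p - 1) 1)) := by
  set a := ‖z‖ with ha_def
  set b := ‖w‖ with hb_def
  set d := ‖z - w‖ with hd_def
  set θ := min (p-1) 1 with hθ_def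
  have ha0 : 0 ≤ a := norm_nonneg z
  have hb0 : 0 ≤ b := norm_nonneg w
  have hd0 : 0 ≤ d := norm_nonneg _
  have hτa : (0:ℝ) ≤ a ^ (p-1-θ) := Real.rpow_nonneg ha0 _
  have hτb : (0:ℝ) ≤ b ^ (p-1-θ) := Real.rpow_nonneg hb0 _
  have hdθ : (0:ℝ) ≤ d ^ θ := Real.rpow_nonneg hd0 _
  set x := ‖Fz p z - Fz p w‖ with hx_def
  set y := ‖Fzbar p z - Fzbar p w‖ with hy_def
  have hx0 : 0 ≤ x := norm_nonneg _
  have hy0 : 0 ≤ y := norm_nonneg _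
  have hsqrt : FderivDist p z w ≤ x + y := by
    rw [FderivDist]
    calc Real.sqrt (x ^ 2 + y ^ 2) ≤ Real.sqrt ((x + y) ^ 2) := by
          apply Real.sqrt_le_sqrt
          nlinarith
      _ = x + y := Real.sqrt_sq (by linarith)
  -- bound x
  have hxval : x = (p+1)/2 * |a ^ (p-1) - b ^ (p-1)| := by
    rw [hx_def, Fz, Fz, ← Complex.ofReal_sub, Complex.norm_real, Real.norm_eq_abs,
      show (p+1)/2 * a ^ (p-1) - (p+1)/2 * b ^ (p-1) = (p+1)/2 * (a ^ (p-1) - b ^ (p-1)) by ring,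
      abs_mul, abs_of_pos (show (0:ℝ) < (p+1)/2 by linarith)]
  have habs : |a ^ (p-1) - b ^ (p-1)| = a ^ (p-1) - b ^ (p-1) :=
    abs_of_nonneg (sub_nonneg.2 (Real.rpow_le_rpow hb0 hba (by linarith)))
  have habd : a - b ≤ d := by
    rw [ha_def, hb_def, hd_def]
    exact norm_sub_norm_le z w
  have hx : x ≤ (p+1)/2 * ((p+1) * d ^ θ * (a ^ (p-1-θ) + b ^ (p-1-θ))) := by
    rw [hxval, habs]
    exact mul_le_mul_of_nonneg_left (fz_core p hp hb0 hba habd hd0) (by linarith)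
  -- bound y
  have hyval : y = (p-1)/2 *
      ‖((a ^ (p-3) : ℝ) : ℂ) * z^2 - ((b ^ (p-3) : ℝ) : ℂ) * w^2‖ := by
    have hfac : Fz p z - Fz p w = Fz p z - Fz p w := rfl
    have : Fzbar p z - Fzbar p w
        = (((p-1)/2 : ℝ) : ℂ) * (((a ^ (p-3) : ℝ) : ℂ) * z^2 - ((b ^ (p-3) : ℝ) : ℂ) * w^2) := by
      rw [Fzbar, Fzbar]
      push_cast
      ring
    rw [hy_def, this, norm_mul, Complex.norm_real, Real.norm_eq_abs,
      abs_of_pos (show (0:ℝ) < (p-1)/2 by linarith)]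
  have hy : y ≤ (p-1)/2 * ((9*(p+3)+4) * d ^ θ * (a ^ (p-1-θ) + b ^ (p-1-θ))) := by
    rw [hyval]
    exact mul_le_mul_of_nonneg_left (fzbar_core p hp z w hba) (by linarith)
  calc FderivDist p z w ≤ x + y := hsqrt
    _ ≤ (p+1)/2 * ((p+1) * d ^ θ * (a ^ (p-1-θ) + b ^ (p-1-θ)))
        + (p-1)/2 * ((9*(p+3)+4) * d ^ θ * (a ^ (p-1-θ) + b ^ (p-1-θ))) := add_le_add hx hy
    _ = ((p+1)/2 * (p+1) + (p-1)/2 * (9*(p+3)+4)) * d ^ θ * (a ^ (p-1-θ) + b ^ (p-1-θ)) := by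
        ring

theorem holder_continuity_of_F_deriv (p : ℝ) (hp : 1 < p) :
    ∃ C : ℝ, 0 < C ∧ ∀ z w : ℂ,
      FderivDist p z w ≤
        C * ‖z - w‖ ^ min (p - 1) 1 *
          (‖z‖ ^ (p - 1 - min (p - 1) 1) +
            ‖w‖ ^ (p - 1 - min (p - 1) 1)) := by
  refine ⟨(p+1)/2 * (p+1) + (p-1)/2 * (9*(p+3)+4), by nlinarith, fun z w => ?_⟩
  rcases le_total (‖w‖) (‖z‖) with h | h
  · exact main_aux p hp z w h
  · have e1 : FderivDist p z w = FderivDist p w z := by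
      rw [FderivDist, FderivDist, norm_sub_rev (Fz p z) (Fz p w),
        norm_sub_rev (Fzbar p z) (Fzbar p w), add_comm]
    have e2 : ‖w - z‖ = ‖z - w‖ := norm_sub_rev w z
    have := main_aux p hp w z h
    rw [e1]
    rw [e2] at this
    linarith [this]
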